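/- Let (V, e_V) and (W, e_W) be absolute order unit spaces and φ : V → W a surjective linear map. Then φ is an order isometry if and only if φ is a unital isometry. -/

import Mathlib

/-- An absolutely ordered space: a real ordered vector space `(V, P)` together with an
absolute value map `abs : V → P` satisfying axioms (a)–(e). -/
structure AbsOrderedSpace (V : Type*) [AddCommGroup V] [Module ℝ V] where
  /-- the positive cone -/
  P : Set V
  add_mem : ∀ u ∈ P, ∀ v ∈ P, u + v ∈ P
  smul_mem : ∀ (k : ℝ), 0 ≤ k → ∀ v ∈ P, k • v ∈ P
  /-- the absolute value map -/
  abs : V → V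
  abs_mem : ∀ v, abs v ∈ P
  /-- (a) -/
  abs_of_mem : ∀ v ∈ P, abs v = v
  /-- (b) -/
  abs_add_mem : ∀ v, abs v + v ∈ P
  abs_sub_mem : ∀ v, abs v - v ∈ P
  /-- (c) -/
  abs_smul : ∀ (k : ℝ) (v : V), abs (k • v) = |k| • abs v
  /-- (d) -/
  axiom_d : ∀ u v w : V, abs (u - v) = u + v → w ∈ P → v - w ∈ P → abs (u - w) = u + w
  /-- (e) -/
  axiom_e₁ : ∀ u v w : V, abs (u - v) = u + v → abs (u - w) = u + w →
    abs (u - abs (v + w)) = u + abs (v + w)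
  axiom_e₂ : ∀ u v w : V, abs (u - v) = u + v → abs (u - w) = u + w →
    abs (u - abs (v - w)) = u + abs (v - w)
/-- An absolute order unit space: an absolutely ordered space whose norm is the order unit
norm determined by an order unit `e`, with closed cone, satisfying
`‖v‖ ≤ max(‖u‖, ‖w‖)` for `u ≤ v ≤ w`, and in which orthogonality coincides with absolute
`∞`-orthogonality on the positive cone. -/
structure AbsOrderUnitSpace (V : Type*) [NormedAddCommGroup V] [NormedSpace ℝ V] extends
    AbsOrderedSpace V where
  /-- the order unit -/
  e : V
  e_mem : e ∈ P
  cone_closed : IsClosed P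
  /-- `e` is an order unit -/
  orderUnit : ∀ v : V, ∃ k : ℝ, 0 < k ∧ k • e + v ∈ P ∧ k • e - v ∈ P
  /-- the norm is the order unit norm determined by `e` -/
  norm_eq : ∀ v : V, ‖v‖ = sInf {k : ℝ | 0 < k ∧ k • e + v ∈ P ∧ k • e - v ∈ P}
  /-- condition (a): `‖v‖ ≤ max (‖u‖, ‖w‖)` whenever `u ≤ v ≤ w` -/
  norm_le_max : ∀ u v w : V, v - u ∈ P → w - v ∈ P → ‖v‖ ≤ max ‖u‖ ‖w‖
  /-- condition (b): `⊥ = ⊥ᵃ_∞` on the positive cone -/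
  perp_iff : ∀ u ∈ P, ∀ v ∈ P,
    (abs (u - v) = u + v ↔
      ∀ u₁ v₁ : V, u₁ ∈ P → u - u₁ ∈ P → v₁ ∈ P → v - v₁ ∈ P →
        ∀ α β : ℝ, ‖α • u₁ + β • v₁‖ = max ‖α • u₁‖ ‖β • v₁‖)

/-- `l_V(v) = inf {‖u‖ : u ∈ V⁺, u + v ∈ V⁺}`. -/
noncomputable def AbsOrderUnitSpace.ell {V : Type*} [NormedAddCommGroup V]
    [NormedSpace ℝ V] (A : AbsOrderUnitSpace V) (v : V) : ℝ :=
  sInf {r : ℝ | ∃ u ∈ A.P, u + v ∈ A.P ∧ ‖u‖ = r}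


section Aux

open Filter Topology

variable {V : Type*} [NormedAddCommGroup V] [NormedSpace ℝ V] (A : AbsOrderUnitSpace V)

lemma Aux.zero_mem : (0:V) ∈ A.P := by
  have := A.smul_mem 0 le_rfl A.e A.e_mem
  simpa using this

lemma Aux.smul_e_mem {k : ℝ} (hk : 0 ≤ k) : k • A.e ∈ A.P := A.smul_mem k hk A.e A.e_mem

lemma Aux.S_upward {v : V} {k k' : ℝ} (hk : 0 < k) (h1 : k • A.e + v ∈ A.P)
    (h2 : k • A.e - v ∈ A.P) (hkk : k ≤ k') :
    0 < k' ∧ k' • A.e + v ∈ A.P ∧ k' • A.e - v ∈ A.P := by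
  refine ⟨lt_of_lt_of_le hk hkk, ?_, ?_⟩
  · have h := A.add_mem _ (Aux.smul_e_mem A (by linarith : (0:ℝ) ≤ k' - k)) _ h1
    have heq : (k' - k) • A.e + (k • A.e + v) = k' • A.e + v := by
      rw [sub_smul]; abel
    rwa [heq] at h
  · have h := A.add_mem _ (Aux.smul_e_mem A (by linarith : (0:ℝ) ≤ k' - k)) _ h2
    have heq : (k' - k) • A.e + (k • A.e - v) = k' • A.e - v := by
      rw [sub_smul]; abel
    rwa [heq] at h

lemma Aux.S_nonempty (v : V) :
    Set.Nonempty {k : ℝ | 0 < k ∧ k • A.e + v ∈ A.P ∧ k • A.e - v ∈ A.P} :=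
  A.orderUnit v

lemma Aux.mem_S_of_norm_lt {v : V} {k : ℝ} (h : ‖v‖ < k) :
    0 < k ∧ k • A.e + v ∈ A.P ∧ k • A.e - v ∈ A.P := by
  rw [A.norm_eq] at h
  obtain ⟨s, hs, hsk⟩ := exists_lt_of_csInf_lt (Aux.S_nonempty A v) h
  exact Aux.S_upward A hs.1 hs.2.1 hs.2.2 hsk.le

lemma Aux.norm_smul_e (v : V) : ‖v‖ • A.e + v ∈ A.P ∧ ‖v‖ • A.e - v ∈ A.P := by
  have h1 : Tendsto (fun n : ℕ => ‖v‖ + ((n:ℝ)+1)⁻¹) atTop (𝓝 (‖v‖ + 0)) :=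
    tendsto_const_nhds.add (by simpa [one_div] using tendsto_one_div_add_atTop_nhds_zero_nat (𝕜 := ℝ))
  have hmem : ∀ n : ℕ, (0:ℝ) < ‖v‖ + ((n:ℝ)+1)⁻¹ ∧
      (‖v‖ + ((n:ℝ)+1)⁻¹) • A.e + v ∈ A.P ∧ (‖v‖ + ((n:ℝ)+1)⁻¹) • A.e - v ∈ A.P := by
    intro n
    have hp : (0:ℝ) < ((n:ℝ)+1)⁻¹ := by positivity
    exact Aux.mem_S_of_norm_lt A (by linarith)
  constructor
  · have hseq : Tendsto (fun n : ℕ => (‖v‖ + ((n:ℝ)+1)⁻¹) • A.e + v) atTop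
        (𝓝 (‖v‖ • A.e + v)) := by
      have := (h1.smul_const A.e).add (tendsto_const_nhds (x := v))
      simpa using this
    exact A.cone_closed.mem_of_tendsto hseq (Eventually.of_forall fun n => (hmem n).2.1)
  · have hseq : Tendsto (fun n : ℕ => (‖v‖ + ((n:ℝ)+1)⁻¹) • A.e - v) atTop
        (𝓝 (‖v‖ • A.e - v)) := by
      have := (h1.smul_const A.e).sub (tendsto_const_nhds (x := v))
      simpa using this
    exact A.cone_closed.mem_of_tendsto hseq (Eventually.of_forall fun n => (hmem n).2.2)

lemma Aux.norm_le_of {v : V} {k : ℝ} (hk : 0 ≤ k) (h1 : k • A.e + v ∈ A.P)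
    (h2 : k • A.e - v ∈ A.P) : ‖v‖ ≤ k := by
  refine le_of_forall_pos_le_add fun ε hε => ?_
  rw [A.norm_eq]
  refine csInf_le ⟨0, fun x hx => hx.1.le⟩ ?_
  refine ⟨by linarith, ?_, ?_⟩
  · have h := A.add_mem _ (Aux.smul_e_mem A hε.le) _ h1
    have heq : ε • A.e + (k • A.e + v) = (k + ε) • A.e + v := by rw [add_smul]; abel
    rwa [heq] at h
  · have h := A.add_mem _ (Aux.smul_e_mem A hε.le) _ h2
    have heq : ε • A.e + (k • A.e - v) = (k + ε) • A.e - v := by rw [add_smul]; abel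
    rwa [heq] at h

lemma Aux.norm_e_le_one : ‖A.e‖ ≤ 1 := by
  refine Aux.norm_le_of A zero_le_one ?_ ?_
  · rw [one_smul]; exact A.add_mem _ A.e_mem _ A.e_mem
  · rw [one_smul, sub_self]; exact Aux.zero_mem A

lemma Aux.eq_zero_of_mem_of_neg_mem {v : V} (h1 : v ∈ A.P) (h2 : -v ∈ A.P) : v = 0 := by
  have hle : ‖v‖ ≤ 0 := by
    refine le_of_forall_pos_le_add fun ε hε => ?_
    have h := Aux.norm_le_of A (by linarith : (0:ℝ) ≤ ε)
      (A.add_mem _ (Aux.smul_e_mem A hε.le) _ h1) ?_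
    · linarith
    · have h' := A.add_mem _ (Aux.smul_e_mem A hε.le) _ h2
      have heq : ε • A.e + -v = ε • A.e - v := by abel
      rwa [heq] at h'
  simpa using le_antisymm hle (norm_nonneg v)

lemma Aux.mem_iff_norm_le : ∀ v : V, v ∈ A.P ↔ ‖‖v‖ • A.e - v‖ ≤ ‖v‖ := by
  intro v
  constructor
  · intro hv
    refine Aux.norm_le_of A (norm_nonneg v) ?_ ?_
    · have h := A.add_mem _ (Aux.smul_e_mem A (norm_nonneg v)) _ (Aux.norm_smul_e A v).2
      have heq : ‖v‖ • A.e + (‖v‖ • A.e - v) = ‖v‖ • A.e + (‖v‖ • A.e - v) := rfl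
      exact h
    · have heq : ‖v‖ • A.e - (‖v‖ • A.e - v) = v := by abel
      rw [heq]; exact hv
  · intro h
    set w := ‖v‖ • A.e - v with hw
    have h1 : ‖w‖ • A.e - w ∈ A.P := (Aux.norm_smul_e A w).2
    have h2 : (‖v‖ - ‖w‖) • A.e ∈ A.P := Aux.smul_e_mem A (by linarith)
    have h3 := A.add_mem _ h2 _ h1
    have heq : (‖v‖ - ‖w‖) • A.e + (‖w‖ • A.e - w) = v := by
      rw [hw, sub_smul]; abel
    rwa [heq] at h3

lemma Aux.e_sub_mem {v : V} (h : ‖v‖ ≤ 1) : A.e - v ∈ A.P := by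
  have h1 : (1 - ‖v‖) • A.e ∈ A.P := Aux.smul_e_mem A (by linarith)
  have h2 := A.add_mem _ h1 _ (Aux.norm_smul_e A v).2
  have heq : (1 - ‖v‖) • A.e + (‖v‖ • A.e - v) = A.e - v := by
    rw [sub_smul, one_smul]; abel
  rwa [heq] at h2

-- facts about ell

lemma Aux.T_nonempty (v : V) :
    Set.Nonempty {r : ℝ | ∃ u ∈ A.P, u + v ∈ A.P ∧ ‖u‖ = r} :=
  ⟨‖‖v‖ • A.e‖, ‖v‖ • A.e, Aux.smul_e_mem A (norm_nonneg v), (Aux.norm_smul_e A v).1, rfl⟩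

lemma Aux.T_bdd (v : V) :
    BddBelow {r : ℝ | ∃ u ∈ A.P, u + v ∈ A.P ∧ ‖u‖ = r} :=
  ⟨0, fun r ⟨u, _, _, hr⟩ => hr ▸ norm_nonneg u⟩

lemma Aux.ell_nonneg (v : V) : 0 ≤ A.ell v :=
  le_csInf (Aux.T_nonempty A v) fun r ⟨u, _, _, hr⟩ => hr ▸ norm_nonneg u

lemma Aux.ell_le {v u : V} (hu : u ∈ A.P) (huv : u + v ∈ A.P) : A.ell v ≤ ‖u‖ :=
  csInf_le (Aux.T_bdd A v) ⟨u, hu, huv, rfl⟩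

lemma Aux.ell_exists_lt {v : V} {c : ℝ} (h : A.ell v < c) :
    ∃ u, u ∈ A.P ∧ u + v ∈ A.P ∧ ‖u‖ < c := by
  obtain ⟨r, ⟨u, hu, huv, hr⟩, hrc⟩ := exists_lt_of_csInf_lt (Aux.T_nonempty A v) h
  exact ⟨u, hu, huv, hr ▸ hrc⟩

lemma Aux.ell_eq_zero_iff (v : V) : A.ell v = 0 ↔ v ∈ A.P := by
  constructor
  · intro h
    have hn : ∀ n : ℕ, ∃ u, u ∈ A.P ∧ u + v ∈ A.P ∧ ‖u‖ < ((n:ℝ)+1)⁻¹ := by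
      intro n
      exact Aux.ell_exists_lt A (h ▸ (by positivity : (0:ℝ) < ((n:ℝ)+1)⁻¹))
    choose u hu huv hun using hn
    have htend : Tendsto (fun n => u n + v) atTop (𝓝 v) := by
      have h0 : Tendsto (fun n : ℕ => u n) atTop (𝓝 0) := by
        refine squeeze_zero_norm (fun n => (hun n).le) ?_
        simpa [one_div] using tendsto_one_div_add_atTop_nhds_zero_nat (𝕜 := ℝ)
      have := h0.add (tendsto_const_nhds (x := v))
      simpa using this
    exact A.cone_closed.mem_of_tendsto htend (Eventually.of_forall huv)
  · intro hv
    refine le_antisymm ?_ (Aux.ell_nonneg A v)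
    have h := Aux.ell_le A (Aux.zero_mem A) (by simpa using hv)
    simpa using h

lemma Aux.norm_eq_max_ell (v : V) : ‖v‖ = max (A.ell v) (A.ell (-v)) := by
  refine le_antisymm ?_ ?_
  · refine le_of_forall_pos_le_add fun ε hε => ?_
    obtain ⟨u, hu, huv, hun⟩ := Aux.ell_exists_lt A
      (lt_add_of_pos_right (A.ell v) hε)
    obtain ⟨u', hu', hu'v, hu'n⟩ := Aux.ell_exists_lt A
      (lt_add_of_pos_right (A.ell (-v)) hε)
    have h := A.norm_le_max (-u) v u' (by simpa [add_comm] using huv)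
      (by have : u' + -v = u' - v := by abel
          rwa [this] at hu'v)
    rw [norm_neg] at h
    calc ‖v‖ ≤ max ‖u‖ ‖u'‖ := h
    _ ≤ max (A.ell v + ε) (A.ell (-v) + ε) := max_le_max hun.le hu'n.le
    _ = max (A.ell v) (A.ell (-v)) + ε := by rw [max_add_add_right]
  · have h1 : A.ell v ≤ ‖v‖ := by
      refine (Aux.ell_le A (Aux.smul_e_mem A (norm_nonneg v)) (Aux.norm_smul_e A v).1).trans ?_
      rw [norm_smul, Real.norm_eq_abs, abs_of_nonneg (norm_nonneg v)]
      calc ‖v‖ * ‖A.e‖ ≤ ‖v‖ * 1 := by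
            exact mul_le_mul_of_nonneg_left (Aux.norm_e_le_one A) (norm_nonneg v)
      _ = ‖v‖ := mul_one _
    have h2 : A.ell (-v) ≤ ‖v‖ := by
      have hm : ‖v‖ • A.e + -v ∈ A.P := by
        have := (Aux.norm_smul_e A v).2
        have heq : ‖v‖ • A.e - v = ‖v‖ • A.e + -v := by abel
        rwa [heq] at this
      refine (Aux.ell_le A (Aux.smul_e_mem A (norm_nonneg v)) hm).trans ?_
      rw [norm_smul, Real.norm_eq_abs, abs_of_nonneg (norm_nonneg v)]
      calc ‖v‖ * ‖A.e‖ ≤ ‖v‖ * 1 :=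
            mul_le_mul_of_nonneg_left (Aux.norm_e_le_one A) (norm_nonneg v)
      _ = ‖v‖ := mul_one _
    exact max_le h1 h2

end Aux

/-- A surjective linear map between absolute order unit spaces is an order isometry iff
it is a unital isometry. -/
theorem orderIsometry_iff_unital_isometry {V W : Type*} [NormedAddCommGroup V]
    [NormedSpace ℝ V] [NormedAddCommGroup W] [NormedSpace ℝ W]
    (A : AbsOrderUnitSpace V) (B : AbsOrderUnitSpace W) (φ : V →ₗ[ℝ] W)
    (hsurj : Function.Surjective φ) :
    (∀ v : V, B.ell (φ v) = A.ell v) ↔ (φ A.e = B.e ∧ ∀ v : V, ‖φ v‖ = ‖v‖) := by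
  constructor
  · -- order isometry → unital isometry
    intro h
    have hmap : ∀ v : V, v ∈ A.P ↔ φ v ∈ B.P := by
      intro v
      rw [← Aux.ell_eq_zero_iff A, ← Aux.ell_eq_zero_iff B, h v]
    have hiso : ∀ v : V, ‖φ v‖ = ‖v‖ := by
      intro v
      rw [Aux.norm_eq_max_ell B (φ v), Aux.norm_eq_max_ell A v, h v, ← map_neg, h (-v)]
    refine ⟨?_, hiso⟩
    have h1 : B.e - φ A.e ∈ B.P := by
      refine Aux.e_sub_mem B ?_
      rw [hiso]
      exact Aux.norm_e_le_one A
    have h2 : φ A.e - B.e ∈ B.P := by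
      obtain ⟨u, hu⟩ := hsurj B.e
      have humem : u ∈ A.P := (hmap u).2 (hu ▸ B.e_mem)
      have hun : ‖u‖ ≤ 1 := by
        rw [← hiso, hu]; exact Aux.norm_e_le_one B
      have h3 : A.e - u ∈ A.P := Aux.e_sub_mem A hun
      have h4 := (hmap _).1 h3
      rwa [map_sub, hu] at h4
    have h0 := Aux.eq_zero_of_mem_of_neg_mem B h2 (by simpa using h1)
    exact sub_eq_zero.mp h0
  · -- unital isometry → order isometry
    rintro ⟨hunit, hiso⟩ v
    have hmap : ∀ v : V, v ∈ A.P ↔ φ v ∈ B.P := by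
      intro v
      rw [Aux.mem_iff_norm_le A v, Aux.mem_iff_norm_le B (φ v)]
      have heq : ‖φ v‖ • B.e - φ v = φ (‖v‖ • A.e - v) := by
        rw [map_sub, map_smul, hunit, hiso]
      rw [heq, hiso, hiso]
    have hset : {r : ℝ | ∃ u ∈ B.P, u + φ v ∈ B.P ∧ ‖u‖ = r}
        = {r : ℝ | ∃ u ∈ A.P, u + v ∈ A.P ∧ ‖u‖ = r} := by
      ext r
      constructor
      · rintro ⟨u', hu', hu'v, hr⟩
        obtain ⟨u, rfl⟩ := hsurj u'
        refine ⟨u, (hmap u).2 hu', ?_, by rw [← hiso]; exact hr⟩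
        exact (hmap (u + v)).2 (by rwa [map_add])
      · rintro ⟨u, hu, huv, hr⟩
        exact ⟨φ u, (hmap u).1 hu, by rw [← map_add]; exact (hmap (u+v)).1 huv,
          by rw [hiso]; exact hr⟩
    simp only [AbsOrderUnitSpace.ell, hset]
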